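/- If X is elliptically symmetric in ℝ^d with mean μ₀, nonsingular covariance Σ₀, and E[X | β⊤X] exists for β ∈ ℝ^d with β⊤Σ₀β ≠ 0, then E[X | β⊤X] = μ₀ + (β⊤(X − μ₀)/(β⊤Σ₀β)) Σ₀β almost surely. -/

import Mathlib

open MeasureTheory
open scoped ProbabilityTheory RealInnerProductSpace

/-- A random vector is spherically symmetric if its distribution is invariant under
all orthogonal transformations (linear isometries) of `ℝ^d`. -/
def IsSphericallySymmetric {Ω : Type*} [MeasurableSpace Ω] {d : ℕ}
    (μ : Measure Ω) (X : Ω → EuclideanSpace ℝ (Fin d)) : Prop :=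
  ∀ L : EuclideanSpace ℝ (Fin d) ≃ₗᵢ[ℝ] EuclideanSpace ℝ (Fin d),
    Measure.map (fun ω => L (X ω)) μ = Measure.map X μ

/-- Key symmetry lemma: if `Y` is spherically symmetric and `⟪α, w⟫ = 0`, then for any
measurable `φ : ℝ → ℝ` the integral `∫ φ(⟪α, Y⟫) * ⟪w, Y⟫` vanishes. -/
theorem key_symm {Ω : Type*} [MeasureSpace Ω] {d : ℕ}
    (Y : Ω → EuclideanSpace ℝ (Fin d)) (hY : Measurable Y)
    (hsph : IsSphericallySymmetric ℙ Y)
    (α w : EuclideanSpace ℝ (Fin d)) (hw : ⟪α, w⟫ = 0)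
    (φ : ℝ → ℝ) (hφ : Measurable φ) :
    ∫ ω, φ ⟪α, Y ω⟫ * ⟪w, Y ω⟫ ∂(ℙ : Measure Ω) = 0 := by
  rcases eq_or_ne w 0 with rfl | hw0
  · simp
  set L : EuclideanSpace ℝ (Fin d) ≃ₗᵢ[ℝ] EuclideanSpace ℝ (Fin d) :=
    Submodule.reflection ((ℝ ∙ w)ᗮ) with hL
  have hLw : L w = -w :=
    Submodule.reflection_mem_subspace_orthogonal_precomplement_eq_neg
      (Submodule.mem_span_singleton_self w)
  have hLα : L α = α :=
    Submodule.reflection_mem_subspace_eq_self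
      (Submodule.mem_orthogonal_singleton_iff_inner_right.mpr
        (by rw [real_inner_comm]; exact hw))
  have hself : ∀ x y : EuclideanSpace ℝ (Fin d), ⟪L x, y⟫ = ⟪x, L y⟫ := by
    intro x y
    calc ⟪L x, y⟫ = ⟪L x, L (L y)⟫ := by rw [hL, Submodule.reflection_reflection]
    _ = ⟪x, L y⟫ := L.inner_map_map x (L y)
  set F : EuclideanSpace ℝ (Fin d) → ℝ := fun y => φ ⟪α, y⟫ * ⟪w, y⟫ with hF
  have hFm : Measurable F := by
    apply Measurable.mul
    · exact hφ.comp (continuous_const.inner continuous_id).measurable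
    · exact (continuous_const.inner continuous_id).measurable
  have hFL : ∀ y : EuclideanSpace ℝ (Fin d), F (L y) = -F y := by
    intro y
    have h1 : ⟪α, L y⟫ = ⟪α, y⟫ := by rw [← hself, hLα]
    have h2 : ⟪w, L y⟫ = -⟪w, y⟫ := by rw [← hself, hLw, inner_neg_left]
    show φ ⟪α, L y⟫ * ⟪w, L y⟫ = -(φ ⟪α, y⟫ * ⟪w, y⟫)
    rw [h1, h2]; ring
  have hI : ∫ ω, F (Y ω) ∂(ℙ : Measure Ω) = ∫ ω, F (L (Y ω)) ∂(ℙ : Measure Ω) := by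
    rw [← integral_map hY.aemeasurable hFm.aestronglyMeasurable, ← hsph L]
    exact integral_map ((L.continuous.measurable.comp hY)).aemeasurable
      hFm.aestronglyMeasurable
  have hneg : ∫ ω, F (L (Y ω)) ∂(ℙ : Measure Ω) = -∫ ω, F (Y ω) ∂(ℙ : Measure Ω) := by
    rw [← integral_neg]
    exact integral_congr_ae (Filter.Eventually.of_forall fun ω => hFL (Y ω))
  have : ∫ ω, F (Y ω) ∂(ℙ : Measure Ω) = 0 := by
    have := hI.trans hneg; linarith
  exact this

/-- If `X = μ₀ + Σ₀^{1/2} Y` is elliptically symmetric with mean `μ₀` and nonsingular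
covariance `Σ₀ = T ∘ T` (where `T = Σ₀^{1/2}` is symmetric positive definite and `Y` is
spherically symmetric with identity covariance), then for `β` with `β⊤Σ₀β ≠ 0`,
`E[X | β⊤X] = μ₀ + (β⊤(X − μ₀)/(β⊤Σ₀β)) Σ₀β` almost surely. -/
theorem stmt11 {Ω : Type*} [MeasureSpace Ω] [IsProbabilityMeasure (ℙ : Measure Ω)]
    {d : ℕ} (X Y : Ω → EuclideanSpace ℝ (Fin d)) (hY : Measurable Y)
    (μ₀ : EuclideanSpace ℝ (Fin d))
    (T : EuclideanSpace ℝ (Fin d) →L[ℝ] EuclideanSpace ℝ (Fin d))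
    (hTsymm : ∀ x y, ⟪T x, y⟫ = ⟪x, T y⟫)
    (hTpos : ∀ x, x ≠ 0 → 0 < ⟪T x, x⟫)
    (hXY : ∀ ω, X ω = μ₀ + T (Y ω))
    (hsph : IsSphericallySymmetric ℙ Y)
    (hmom : Integrable (fun ω => ‖Y ω‖ ^ 2) ℙ)
    (hcov : ∀ a b : EuclideanSpace ℝ (Fin d), ∫ ω, ⟪a, Y ω⟫ * ⟪b, Y ω⟫ ∂ℙ = ⟪a, b⟫)
    (β : EuclideanSpace ℝ (Fin d)) (hβ : ⟪β, T (T β)⟫ ≠ 0) :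
    (ℙ : Measure Ω)[X | MeasurableSpace.comap (fun ω => ⟪β, X ω⟫) (borel ℝ)]
      =ᵐ[ℙ] fun ω => μ₀ + (⟪β, X ω - μ₀⟫ / ⟪β, T (T β)⟫) • T (T β) := by
  have hbor : (borel ℝ) = (inferInstance : MeasurableSpace ℝ) :=
    (BorelSpace.measurable_eq (α := ℝ)).symm
  set α : EuclideanSpace ℝ (Fin d) := T β with hαdef
  have hβT : ∀ y : EuclideanSpace ℝ (Fin d), ⟪β, T y⟫ = ⟪α, y⟫ := fun y => (hTsymm β y).symm
  have hden : ⟪β, T (T β)⟫ = ⟪α, α⟫ := hβT (T β)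
  have hdenne : ⟪α, α⟫ ≠ 0 := hden ▸ hβ
  -- basic measurability and integrability
  have hYint : Integrable Y ℙ := by
    refine Integrable.mono' ((integrable_const (1:ℝ)).add hmom) hY.aestronglyMeasurable
      (Filter.Eventually.of_forall fun ω => ?_)
    have h0 : (0:ℝ) ≤ ‖Y ω‖ := norm_nonneg _
    show ‖Y ω‖ ≤ 1 + ‖Y ω‖ ^ 2
    nlinarith [sq_nonneg (‖Y ω‖ - 1)]
  have hXfun : X = fun ω => μ₀ + T (Y ω) := funext hXY
  have hXmeas : Measurable X := by
    rw [hXfun]; exact measurable_const.add (T.continuous.measurable.comp hY)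
  have hXint : Integrable X ℙ := by
    rw [hXfun]; exact (integrable_const μ₀).add (T.integrable_comp hYint)
  have hinnY : ∀ c : EuclideanSpace ℝ (Fin d), Integrable (fun ω => ⟪c, Y ω⟫) ℙ := by
    intro c
    have := (innerSL ℝ c).integrable_comp hYint
    simpa using this
  -- the conditioning map
  set h : Ω → ℝ := fun ω => ⟪β, X ω⟫ with hhdef
  have hh_eq : ∀ ω, h ω = ⟪β, μ₀⟫ + ⟪α, Y ω⟫ := by
    intro ω; simp only [hhdef, hXY ω, inner_add_right, hβT]
  have hhm : Measurable h :=
    (continuous_const.inner continuous_id).measurable.comp hXmeas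
  have hm : MeasurableSpace.comap h (borel ℝ) ≤ (inferInstance : MeasurableSpace Ω) := by
    rw [hbor]
    exact hhm.comap_le
  -- the candidate function
  set g : Ω → EuclideanSpace ℝ (Fin d) :=
    fun ω => μ₀ + (⟪β, X ω - μ₀⟫ / ⟪β, T (T β)⟫) • T (T β) with hgdef
  have hg_eq' : ∀ ω, g ω = μ₀ + (⟪α, Y ω⟫ / ⟪α, α⟫) • T α := by
    intro ω
    have hXμ : X ω - μ₀ = T (Y ω) := by rw [hXY ω]; abel
    simp only [hgdef, hXμ, hβT, hden, hαdef]
  have hgint : Integrable g ℙ := by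
    have h1 : Integrable (fun ω => (⟪α, Y ω⟫ / ⟪α, α⟫) • T α) ℙ :=
      ((hinnY α).div_const _).smul_const (T α)
    have h2 := (integrable_const μ₀).add h1
    exact h2.congr (Filter.Eventually.of_forall fun ω => (hg_eq' ω).symm)
  -- m-measurability of g
  have hgm : StronglyMeasurable[MeasurableSpace.comap h (borel ℝ)] g := by
    have hhm' : Measurable[MeasurableSpace.comap h (borel ℝ)] h := by
      rw [hbor]; exact measurable_iff_comap_le.mpr le_rfl
    have hgfun : g = fun ω => μ₀ + ((h ω - ⟪β, μ₀⟫) / ⟪α, α⟫) • T α := by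
      funext ω
      rw [hg_eq' ω, hh_eq ω, add_sub_cancel_left]
    have hcont : Continuous fun t : ℝ => μ₀ + ((t - ⟪β, μ₀⟫) / ⟪α, α⟫) • T α :=
      continuous_const.add (((continuous_id.sub continuous_const).div_const _).smul
        continuous_const)
    have hgmeas : Measurable[MeasurableSpace.comap h (borel ℝ)] g := by
      rw [hgfun]; exact hcont.measurable.comp hhm'
    exact hgmeas.stronglyMeasurable
  -- the set-integral equality
  have hg_seteq : ∀ s : Set Ω, MeasurableSet[MeasurableSpace.comap h (borel ℝ)] s →
      (ℙ : Measure Ω) s < ⊤ →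
      ∫ ω in s, g ω ∂ℙ = ∫ ω in s, X ω ∂ℙ := by
    intro s hs _
    obtain ⟨B, hB, rfl⟩ := hs
    have hBm : MeasurableSet B := by rw [hbor] at hB; exact hB
    have hsm : MeasurableSet (h ⁻¹' B) := hhm hBm
    set B' : Set ℝ := (fun t => ⟪β, μ₀⟫ + t) ⁻¹' B with hB'def
    have hB'm : MeasurableSet B' := (measurable_const_add _) hBm
    have hset : h ⁻¹' B = (fun ω => ⟪α, Y ω⟫) ⁻¹' B' := by
      ext ω
      simp only [Set.mem_preimage, hB'def, hh_eq ω]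
    have hz : ∫ ω in h ⁻¹' B, (X ω - g ω) ∂ℙ = 0 := by
      refine integral_eq_zero_of_forall_integral_inner_eq_zero (𝕜 := ℝ)
        (fun ω => X ω - g ω) (hXint.sub hgint).integrableOn fun v => ?_
      set w : EuclideanSpace ℝ (Fin d) := T v - (⟪T v, α⟫ / ⟪α, α⟫) • α with hwdef
      have hwperp : ⟪α, w⟫ = 0 := by
        rw [hwdef, inner_sub_right, real_inner_smul_right, div_mul_cancel₀ _ hdenne,
          real_inner_comm α (T v), sub_self]
      have hpt : ∀ ω, ⟪v, X ω - g ω⟫ = ⟪w, Y ω⟫ := by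
        intro ω
        have hd : X ω - g ω = T (Y ω) - (⟪α, Y ω⟫ / ⟪α, α⟫) • T α := by
          rw [hXY ω, hg_eq' ω]; abel
        have e1 : ⟪v, T (Y ω)⟫ = ⟪T v, Y ω⟫ := (hTsymm v (Y ω)).symm
        have e2 : ⟪v, T α⟫ = ⟪T v, α⟫ := (hTsymm v α).symm
        rw [hd, inner_sub_right, real_inner_smul_right, e1, e2,
          hwdef, inner_sub_left, real_inner_smul_left]
        ring
      set φ : ℝ → ℝ := B'.indicator (fun _ => (1:ℝ)) with hφdef
      have hφm : Measurable φ := measurable_const.indicator hB'm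
      have hkey := key_symm Y hY hsph α w hwperp φ hφm
      have hYαm : MeasurableSet ((fun ω => ⟪α, Y ω⟫) ⁻¹' B') :=
        ((continuous_const.inner continuous_id).measurable.comp hY) hB'm
      rw [hset, ← integral_indicator hYαm, ← hkey]
      congr 1
      funext ω
      by_cases hmem : ⟪α, Y ω⟫ ∈ B'
      · rw [Set.indicator_of_mem (by exact hmem), hφdef,
          Set.indicator_of_mem hmem, one_mul, hpt ω]
      · rw [Set.indicator_of_notMem (by exact hmem), hφdef,
          Set.indicator_of_notMem hmem, zero_mul]
    have h4 : ∫ ω in h ⁻¹' B, X ω ∂ℙ - ∫ ω in h ⁻¹' B, g ω ∂ℙ = 0 := by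
      rw [← integral_sub hXint.integrableOn hgint.integrableOn]
      exact hz
    exact (sub_eq_zero.mp h4).symm
  exact (ae_eq_condExp_of_forall_setIntegral_eq hm hXint
    (fun s _ _ => hgint.integrableOn) hg_seteq hgm.aestronglyMeasurable).symm
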